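/- arXiv:1607.00571 — 2 statements merged into one kernel-verified Lean document; each statement's English description precedes it below -/
import Mathlib

section
/- For n, r ≥ 1: (i) S_r^−Λ^0(ℝ^n) = S_rΛ^0(ℝ^n); (ii) S_r^−Λ^n(ℝ^n) = S_{r−1}Λ^n(ℝ^n); (iii) S_r^−Λ^k(ℝ^n) + dS_{r+1}Λ^{k−1}(ℝ^n) = S_rΛ^k(ℝ^n). -/
open MvPolynomial

/-- Polynomial differential forms on `ℝ^n`: a family of polynomial coefficients indexed by
subsets `σ ⊆ {1,…,n}`; a `k`-form is supported on sets of cardinality `k`. -/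
abbrev PolyForm (n : ℕ) := Finset (Fin n) → MvPolynomial (Fin n) ℝ

/-- The sign `(-1)^{#{j ∈ σ : j < i}}`. -/
noncomputable def sgn {n : ℕ} (σ : Finset (Fin n)) (i : Fin n) : MvPolynomial (Fin n) ℝ :=
  (-1) ^ (σ.filter (fun j => j < i)).card

/-- The exterior derivative `d`. -/
noncomputable def extD (n : ℕ) : PolyForm n →ₗ[ℝ] PolyForm n where
  toFun ω := fun σ => ∑ i ∈ σ, sgn σ i * pderiv i (ω (σ.erase i))
  map_add' ω η := by
    funext σ
    simp [Pi.add_apply, mul_add, Finset.sum_add_distrib]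
  map_smul' c ω := by
    funext σ
    simp [Pi.smul_apply, Finset.smul_sum, mul_smul_comm]

/-- The Koszul operator `κ` (contraction with the position vector field). -/
noncomputable def koszul (n : ℕ) : PolyForm n →ₗ[ℝ] PolyForm n where
  toFun ω := fun σ => ∑ i ∈ σᶜ, sgn σ i * X i * ω (insert i σ)
  map_add' ω η := by
    funext σ
    simp [Pi.add_apply, mul_add, Finset.sum_add_distrib]
  map_smul' c ω := by
    funext σ
    simp [Pi.smul_apply, Finset.smul_sum, mul_smul_comm]

/-- The space of (polynomial) differential `k`-forms: families supported on index sets of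
cardinality `k`. -/
noncomputable def Lambda (n k : ℕ) : Submodule ℝ (PolyForm n) where
  carrier := {ω | ∀ σ, σ.card ≠ k → ω σ = 0}
  zero_mem' := fun σ _ => rfl
  add_mem' := fun ha hb σ h => by simp only [Pi.add_apply, ha σ h, hb σ h, add_zero]
  smul_mem' := fun c ω h σ hσ => by simp only [Pi.smul_apply, h σ hσ, smul_zero]

/-- The form monomial `x^α dx_σ`. -/
noncomputable def formMonomial {n : ℕ} (α : Fin n →₀ ℕ) (σ : Finset (Fin n)) : PolyForm n :=
  fun τ => if τ = σ then monomial α 1 else 0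

/-- The (total) degree `|α|` of a multi-index. -/
def mdeg {n : ℕ} (α : Fin n →₀ ℕ) : ℕ := α.sum fun _ m => m

/-- The linear degree of the form monomial `x^α dx_σ`: the number of `i ∉ σ` with `α i = 1`. -/
def ldeg {n : ℕ} (α : Fin n →₀ ℕ) (σ : Finset (Fin n)) : ℕ :=
  ((σᶜ).filter fun i => α i = 1).card

/-- `H_rΛ^k(ℝ^n)`: `k`-forms with homogeneous degree-`r` polynomial coefficients. -/
noncomputable def Hspace (n r k : ℕ) : Submodule ℝ (PolyForm n) :=
  Submodule.span ℝ {ω | ∃ α σ, σ.card = k ∧ mdeg α = r ∧ ω = formMonomial α σ}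

/-- `P_rΛ^k(ℝ^n)`: `k`-forms with polynomial coefficients of degree at most `r`. -/
noncomputable def Pspace (n r k : ℕ) : Submodule ℝ (PolyForm n) :=
  Submodule.span ℝ {ω | ∃ α σ, σ.card = k ∧ mdeg α ≤ r ∧ ω = formMonomial α σ}

/-- `H_{r,l}Λ^k(ℝ^n)`: homogeneous degree-`r` `k`-forms of linear degree at least `l`. -/
noncomputable def Hl (n r l k : ℕ) : Submodule ℝ (PolyForm n) :=
  Submodule.span ℝ
    {ω | ∃ α σ, σ.card = k ∧ mdeg α = r ∧ l ≤ ldeg α σ ∧ ω = formMonomial α σ}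

/-- `J_rΛ^k(ℝ^n) := Σ_{l ≥ 1} κ H_{r+l-1, l}Λ^{k+1}(ℝ^n)` (here `l` is reindexed as `l+1`). -/
noncomputable def Jspace (n r k : ℕ) : Submodule ℝ (PolyForm n) :=
  ⨆ l : ℕ, Submodule.map (koszul n) (Hl n (r + l) (l + 1) (k + 1))

/-- The trimmed polynomial space `P_r^-Λ^k := P_{r-1}Λ^k ⊕ κ H_{r-1}Λ^{k+1}`. -/
noncomputable def PminusSpace (n r k : ℕ) : Submodule ℝ (PolyForm n) :=
  Pspace n (r - 1) k ⊔ Submodule.map (koszul n) (Hspace n (r - 1) (k + 1))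

/-- The serendipity space `S_rΛ^k := P_rΛ^k + J_rΛ^k + d J_{r+1}Λ^{k-1}`
(the last summand being absent for `k = 0`). -/
noncomputable def Sspace (n r k : ℕ) : Submodule ℝ (PolyForm n) :=
  Pspace n r k ⊔ Jspace n r k ⊔
    (if k = 0 then ⊥ else Submodule.map (extD n) (Jspace n (r + 1) (k - 1)))

/-- The trimmed serendipity space `S_r^-Λ^k := S_{r-1}Λ^k + κ S_{r-1}Λ^{k+1}`. -/
noncomputable def SminusSpace (n r k : ℕ) : Submodule ℝ (PolyForm n) :=
  Sspace n (r - 1) k ⊔ Submodule.map (koszul n) (Sspace n (r - 1) (k + 1))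

noncomputable def rsgn {n : ℕ} (σ : Finset (Fin n)) (i : Fin n) : ℝ :=
  (-1) ^ (σ.filter (fun j => j < i)).card

lemma sgn_eq {n : ℕ} (σ : Finset (Fin n)) (i : Fin n) : sgn σ i = C (rsgn σ i) := by
  simp [sgn, rsgn]

lemma fm_apply {n : ℕ} (α : Fin n →₀ ℕ) (σ τ : Finset (Fin n)) :
    formMonomial α σ τ = if τ = σ then monomial α 1 else 0 := rfl

lemma koszul_fm {n : ℕ} (α : Fin n →₀ ℕ) (σ : Finset (Fin n)) :
    koszul n (formMonomial α σ) =
      ∑ i ∈ σ, rsgn (σ.erase i) i • formMonomial (α + Finsupp.single i 1) (σ.erase i) := by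
  funext τ
  show ∑ i ∈ τᶜ, sgn τ i * X i * (formMonomial α σ) (insert i τ) = _
  rw [Finset.sum_apply]
  rw [← Finset.sum_filter_add_sum_filter_not τᶜ (fun i => insert i τ = σ)]
  have h2 : ∀ i ∈ τᶜ.filter (fun i => ¬ insert i τ = σ),
      sgn τ i * X i * (formMonomial α σ) (insert i τ) = 0 := by
    intro i hi
    rw [Finset.mem_filter] at hi
    simp [fm_apply, hi.2]
  rw [Finset.sum_eq_zero h2, add_zero]
  rw [← Finset.sum_filter_add_sum_filter_not σ (fun i => τ = σ.erase i)]
  have h3 : ∀ i ∈ σ.filter (fun i => ¬ τ = σ.erase i),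
      (rsgn (σ.erase i) i • formMonomial (α + Finsupp.single i 1) (σ.erase i)) τ = 0 := by
    intro i hi
    rw [Finset.mem_filter] at hi
    simp [fm_apply, hi.2]
  rw [Finset.sum_eq_zero h3, add_zero]
  apply Finset.sum_nbij' (fun i => i) (fun i => i)
  · intro i hi
    rw [Finset.mem_filter] at hi ⊢
    obtain ⟨hi1, hi2⟩ := hi
    rw [Finset.mem_compl] at hi1
    constructor
    · rw [← hi2]; exact Finset.mem_insert_self i τ
    · rw [← hi2, Finset.erase_insert hi1]
  · intro i hi
    rw [Finset.mem_filter] at hi ⊢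
    obtain ⟨hi1, hi2⟩ := hi
    rw [Finset.mem_compl]
    constructor
    · rw [hi2]; exact Finset.notMem_erase i σ
    · rw [hi2, Finset.insert_erase hi1]
  · intros; rfl
  · intros; rfl
  · intro i hi
    rw [Finset.mem_filter] at hi
    obtain ⟨hi1, hi2⟩ := hi
    rw [Finset.mem_compl] at hi1
    have hτ : τ = σ.erase i := by rw [← hi2, Finset.erase_insert hi1]
    have hiσ : i ∈ σ := by rw [← hi2]; exact Finset.mem_insert_self i τ
    have hins : insert i (σ.erase i) = σ := Finset.insert_erase hiσ
    simp only [fm_apply, Pi.smul_apply, if_pos hτ, hτ, hins, if_pos rfl, if_true]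
    rw [sgn_eq, X, smul_eq_C_mul, mul_assoc, monomial_mul, one_mul, add_comm α]

lemma extD_fm {n : ℕ} (α : Fin n →₀ ℕ) (σ : Finset (Fin n)) :
    extD n (formMonomial α σ) =
      ∑ i ∈ σᶜ, ((α i : ℝ) * rsgn (insert i σ) i) •
        formMonomial (α - Finsupp.single i 1) (insert i σ) := by
  funext τ
  show ∑ i ∈ τ, sgn τ i * pderiv i ((formMonomial α σ) (τ.erase i)) = _
  rw [Finset.sum_apply]
  rw [← Finset.sum_filter_add_sum_filter_not τ (fun i => τ.erase i = σ)]
  have h2 : ∀ i ∈ τ.filter (fun i => ¬ τ.erase i = σ),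
      sgn τ i * pderiv i ((formMonomial α σ) (τ.erase i)) = 0 := by
    intro i hi
    rw [Finset.mem_filter] at hi
    simp [fm_apply, hi.2]
  rw [Finset.sum_eq_zero h2, add_zero]
  rw [← Finset.sum_filter_add_sum_filter_not σᶜ (fun i => τ = insert i σ)]
  have h3 : ∀ i ∈ σᶜ.filter (fun i => ¬ τ = insert i σ),
      (((α i : ℝ) * rsgn (insert i σ) i) •
        formMonomial (α - Finsupp.single i 1) (insert i σ)) τ = 0 := by
    intro i hi
    rw [Finset.mem_filter] at hi
    simp [fm_apply, hi.2]
  rw [Finset.sum_eq_zero h3, add_zero]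
  apply Finset.sum_nbij' (fun i => i) (fun i => i)
  · intro i hi
    rw [Finset.mem_filter] at hi ⊢
    obtain ⟨hi1, hi2⟩ := hi
    constructor
    · rw [Finset.mem_compl, ← hi2]; exact Finset.notMem_erase i τ
    · rw [← hi2, Finset.insert_erase hi1]
  · intro i hi
    rw [Finset.mem_filter] at hi ⊢
    obtain ⟨hi1, hi2⟩ := hi
    rw [Finset.mem_compl] at hi1
    constructor
    · rw [hi2]; exact Finset.mem_insert_self i σ
    · rw [hi2, Finset.erase_insert hi1]
  · intros; rfl
  · intros; rfl
  · intro i hi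
    rw [Finset.mem_filter] at hi
    obtain ⟨hi1, hi2⟩ := hi
    have hτ : τ = insert i σ := by rw [← hi2, Finset.insert_erase hi1]
    have h4 : (insert i σ).erase i = σ :=
      Finset.erase_insert (by rw [← hi2]; exact Finset.notMem_erase i τ)
    simp only [fm_apply, hi2, if_pos rfl, Pi.smul_apply, if_pos hτ, hτ, h4, if_true]
    rw [sgn_eq, pderiv_monomial, smul_eq_C_mul, C_mul, one_mul, mul_assoc,
      C_mul_monomial, C_mul_monomial, C_mul_monomial, mul_one, mul_comm]

lemma rsgn_insert_self {n : ℕ} (ρ : Finset (Fin n)) (i : Fin n) :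
    rsgn (insert i ρ) i = rsgn ρ i := by
  unfold rsgn
  congr 2
  rw [Finset.filter_insert, if_neg (lt_irrefl i)]

lemma rsgn_erase_self {n : ℕ} (σ : Finset (Fin n)) (i : Fin n) :
    rsgn (σ.erase i) i = rsgn σ i := by
  by_cases h : i ∈ σ
  · conv_rhs => rw [← Finset.insert_erase h]
    rw [rsgn_insert_self]
  · rw [Finset.erase_eq_of_notMem h]

lemma rsgn_insert {n : ℕ} {ρ : Finset (Fin n)} {i : Fin n} (hi : i ∉ ρ) (j : Fin n) :
    rsgn (insert i ρ) j = (if i < j then -1 else 1) * rsgn ρ j := by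
  unfold rsgn
  rw [Finset.filter_insert]
  split
  · rw [Finset.card_insert_of_notMem (fun h => hi (Finset.mem_of_mem_filter i h)),
      pow_succ]
    ring
  · rw [one_mul]

lemma rsgn_erase {n : ℕ} {σ : Finset (Fin n)} {i : Fin n} (hi : i ∈ σ) (j : Fin n) :
    rsgn (σ.erase i) j = (if i < j then -1 else 1) * rsgn σ j := by
  conv_rhs => rw [← Finset.insert_erase hi]
  rw [rsgn_insert (Finset.notMem_erase i σ) j]
  split <;> ring

lemma rsgn_sq {n : ℕ} (σ : Finset (Fin n)) (i : Fin n) : rsgn σ i * rsgn σ i = 1 := by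
  unfold rsgn
  rw [← pow_add, ← two_mul, pow_mul]
  norm_num

/-- Mixed sign cancellation: `i ∈ σ`, `j ∉ σ`. -/
lemma sign_cancel_mixed {n : ℕ} {σ : Finset (Fin n)} {i j : Fin n}
    (hi : i ∈ σ) (hj : j ∉ σ) :
    rsgn (σ.erase i) i * rsgn (insert j (σ.erase i)) j
      = -(rsgn (insert j σ) j * rsgn ((insert j σ).erase i) i) := by
  have hij : i ≠ j := fun h => hj (h ▸ hi)
  rw [rsgn_erase_self, rsgn_insert_self, rsgn_erase_self, rsgn_insert_self,
    rsgn_erase hi j, rsgn_insert hj i]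
  rcases hij.lt_or_gt with h | h
  · rw [if_pos h, if_neg (asymm h)]; ring
  · rw [if_neg (asymm h), if_pos h]; ring

/-- κκ sign cancellation: `i, j ∈ σ`, `i ≠ j`. -/
lemma sign_cancel_kk {n : ℕ} {σ : Finset (Fin n)} {i j : Fin n}
    (hi : i ∈ σ) (hj : j ∈ σ) (hij : i ≠ j) :
    rsgn (σ.erase i) i * rsgn ((σ.erase i).erase j) j
      = -(rsgn (σ.erase j) j * rsgn ((σ.erase j).erase i) i) := by
  rw [rsgn_erase_self, rsgn_erase_self, rsgn_erase_self, rsgn_erase_self,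
    rsgn_erase hi j, rsgn_erase hj i]
  rcases hij.lt_or_gt with h | h
  · rw [if_pos h, if_neg (asymm h)]; ring
  · rw [if_neg (asymm h), if_pos h]; ring

/-- dd sign cancellation: `i, j ∉ σ`, `i ≠ j`. -/
lemma sign_cancel_dd {n : ℕ} {σ : Finset (Fin n)} {i j : Fin n}
    (hi : i ∉ σ) (hj : j ∉ σ) (hij : i ≠ j) :
    rsgn (insert i σ) i * rsgn (insert j (insert i σ)) j
      = -(rsgn (insert j σ) j * rsgn (insert i (insert j σ)) i) := by
  rw [rsgn_insert_self, rsgn_insert_self, rsgn_insert_self, rsgn_insert_self,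
    rsgn_insert hi j, rsgn_insert hj i]
  rcases hij.lt_or_gt with h | h
  · rw [if_pos h, if_neg (asymm h)]; ring
  · rw [if_neg (asymm h), if_pos h]; ring

lemma mdeg_eq {n : ℕ} (α : Fin n →₀ ℕ) : mdeg α = ∑ i, α i := by
  rw [mdeg, Finsupp.sum_fintype]
  intro; rfl

lemma sum_antisym {ι M : Type*} [AddCommGroup M] [Module ℝ M] [DecidableEq ι]
    (s : Finset ι) (f : ι → ι → M)
    (hanti : ∀ i ∈ s, ∀ j ∈ s, f i j = - f j i) :
    ∑ i ∈ s, ∑ j ∈ s, f i j = 0 := by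
  have h : (∑ i ∈ s, ∑ j ∈ s, f i j) = - ∑ i ∈ s, ∑ j ∈ s, f i j := by
    nth_rewrite 2 [Finset.sum_comm]
    rw [← Finset.sum_neg_distrib]
    refine Finset.sum_congr rfl fun i hi => ?_
    rw [← Finset.sum_neg_distrib]
    exact Finset.sum_congr rfl fun j hj => by rw [hanti i hi j hj]
  have h2 : (2 : ℝ) • (∑ i ∈ s, ∑ j ∈ s, f i j) = 0 := by
    rw [two_smul]; nth_rewrite 2 [h]; rw [add_neg_cancel]
  have := congrArg (fun x => (2 : ℝ)⁻¹ • x) h2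
  simpa [smul_smul] using this

lemma erase_sum_eq {ι M : Type*} [AddCommGroup M] [DecidableEq ι]
    (s : Finset ι) (i : ι) (hi : i ∈ s) (F : ι → M) :
    ∑ j ∈ s.erase i, F j = ∑ j ∈ s, (if j = i then 0 else F j) := by
  conv_rhs => rw [← Finset.insert_erase hi]
  rw [Finset.sum_insert (Finset.notMem_erase i s), if_pos rfl, zero_add]
  refine Finset.sum_congr rfl fun j hj => ?_
  rw [if_neg (Finset.mem_erase.mp hj).1]

lemma koszul_koszul_fm {n : ℕ} (α : Fin n →₀ ℕ) (σ : Finset (Fin n)) :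
    koszul n (koszul n (formMonomial α σ)) = 0 := by
  rw [koszul_fm, map_sum]
  simp only [map_smul, koszul_fm]
  have : ∀ i ∈ σ, (rsgn (σ.erase i) i •
      ∑ j ∈ σ.erase i, rsgn ((σ.erase i).erase j) j •
        formMonomial (α + Finsupp.single i 1 + Finsupp.single j 1) ((σ.erase i).erase j))
      = ∑ j ∈ σ, (if j = i then 0 else
          (rsgn (σ.erase i) i * rsgn ((σ.erase i).erase j) j) •
            formMonomial (α + Finsupp.single i 1 + Finsupp.single j 1) ((σ.erase i).erase j)) := by
    intro i hi
    rw [Finset.smul_sum, erase_sum_eq σ i hi]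
    refine Finset.sum_congr rfl fun j hj => ?_
    split
    · simp
    · rw [smul_smul]
  rw [Finset.sum_congr rfl this]
  apply sum_antisym
  intro i hi j hj
  by_cases hij : j = i
  · subst hij; simp
  · rw [if_neg hij, if_neg (Ne.symm hij)]
    rw [sign_cancel_kk hi hj (fun h => hij h.symm),
      add_right_comm α (Finsupp.single i 1) (Finsupp.single j 1),
      Finset.erase_right_comm, neg_smul]

lemma extD_extD_fm {n : ℕ} (α : Fin n →₀ ℕ) (σ : Finset (Fin n)) :
    extD n (extD n (formMonomial α σ)) = 0 := by
  rw [extD_fm, map_sum]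
  simp only [map_smul, extD_fm, Finset.compl_insert]
  have : ∀ i ∈ σᶜ, (((α i : ℝ) * rsgn (insert i σ) i) •
      ∑ j ∈ σᶜ.erase i, ((((α - Finsupp.single i 1 : Fin _ →₀ ℕ) j : ℕ) : ℝ) * rsgn (insert j (insert i σ)) j) •
        formMonomial (α - Finsupp.single i 1 - Finsupp.single j 1) (insert j (insert i σ)))
      = ∑ j ∈ σᶜ, (if j = i then 0 else
          (((α i : ℝ) * rsgn (insert i σ) i) *
            ((((α - Finsupp.single i 1 : Fin _ →₀ ℕ) j : ℕ) : ℝ) * rsgn (insert j (insert i σ)) j)) •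
          formMonomial (α - Finsupp.single i 1 - Finsupp.single j 1) (insert j (insert i σ))) := by
    intro i hi
    rw [Finset.smul_sum, erase_sum_eq σᶜ i hi]
    refine Finset.sum_congr rfl fun j hj => ?_
    split
    · simp
    · rw [smul_smul]
  rw [Finset.sum_congr rfl this]
  apply sum_antisym
  intro i hi j hj
  by_cases hij : j = i
  · subst hij; simp
  · rw [if_neg hij, if_neg (fun h => hij h.symm)]
    have hiσ : i ∉ σ := Finset.mem_compl.mp hi
    have hjσ : j ∉ σ := Finset.mem_compl.mp hj
    have h1 : ((α - Finsupp.single i 1 : Fin _ →₀ ℕ) j : ℕ) = α j := by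
      rw [Finsupp.tsub_apply, Finsupp.single_apply, if_neg (fun h => hij h.symm), tsub_zero]
    have h1' : ((α - Finsupp.single j 1 : Fin _ →₀ ℕ) i : ℕ) = α i := by
      rw [Finsupp.tsub_apply, Finsupp.single_apply, if_neg hij, tsub_zero]
    have h2 : α - Finsupp.single i 1 - Finsupp.single j 1
        = α - Finsupp.single j 1 - Finsupp.single i 1 := tsub_right_comm
    have h3 : insert j (insert i σ) = insert i (insert j σ) := Finset.insert_comm j i σ
    rw [h1, h1', h2, h3, ← neg_smul]
    congr 1
    have hs := sign_cancel_dd hiσ hjσ (fun h => hij h.symm)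
    rw [h3] at hs
    linear_combination ((α i : ℝ) * (α j : ℝ)) * hs

noncomputable def cross {n : ℕ} (α : Fin n →₀ ℕ) (σ : Finset (Fin n)) (i j : Fin n) :
    PolyForm n :=
  ((α j : ℝ) * (rsgn (σ.erase i) i * rsgn (insert j (σ.erase i)) j)) •
    formMonomial (α + Finsupp.single i 1 - Finsupp.single j 1) (insert j (σ.erase i))

lemma extD_koszul_fm {n : ℕ} (α : Fin n →₀ ℕ) (σ : Finset (Fin n)) :
    extD n (koszul n (formMonomial α σ)) =
      (∑ i ∈ σ, ((α i : ℝ) + 1)) • formMonomial α σ +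
        ∑ i ∈ σ, ∑ j ∈ σᶜ, cross α σ i j := by
  rw [koszul_fm, map_sum]
  simp only [map_smul, extD_fm, Finset.compl_erase]
  have key : ∀ i ∈ σ, (rsgn (σ.erase i) i •
      ∑ j ∈ insert i σᶜ,
        ((((α + Finsupp.single i 1 : Fin _ →₀ ℕ) j : ℕ) : ℝ) * rsgn (insert j (σ.erase i)) j) •
          formMonomial (α + Finsupp.single i 1 - Finsupp.single j 1) (insert j (σ.erase i)))
      = ((α i : ℝ) + 1) • formMonomial α σ + ∑ j ∈ σᶜ, cross α σ i j := by
    intro i hi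
    have hins : i ∉ σᶜ := by simp [hi]
    rw [Finset.sum_insert hins, smul_add, Finset.smul_sum]
    congr 1
    · have h2 : insert i (σ.erase i) = σ := Finset.insert_erase hi
      have h3 : α + Finsupp.single i 1 - Finsupp.single i 1 = α := add_tsub_cancel_right α _
      have h4 : ((α + Finsupp.single i 1 : Fin _ →₀ ℕ) i : ℕ) = α i + 1 := by
        simp [Finsupp.add_apply]
      rw [h2, h3, h4, smul_smul, rsgn_erase_self]
      congr 1
      have hs := rsgn_sq σ i
      push_cast
      linear_combination ((α i : ℝ) + 1) * hs
    · refine Finset.sum_congr rfl fun j hj => ?_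
      have hij : i ≠ j := fun h => hins (h ▸ hj)
      have h5 : ((α + Finsupp.single i 1 : Fin _ →₀ ℕ) j : ℕ) = α j := by
        rw [Finsupp.add_apply, Finsupp.single_apply, if_neg hij, add_zero]
      rw [h5, smul_smul, cross, ← mul_assoc, mul_comm (rsgn (σ.erase i) i), mul_assoc]
  rw [Finset.sum_congr rfl key, Finset.sum_add_distrib, Finset.sum_smul]

lemma koszul_extD_fm {n : ℕ} (α : Fin n →₀ ℕ) (σ : Finset (Fin n)) :
    koszul n (extD n (formMonomial α σ)) =
      (∑ j ∈ σᶜ, (α j : ℝ)) • formMonomial α σ -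
        ∑ i ∈ σ, ∑ j ∈ σᶜ, cross α σ i j := by
  rw [extD_fm, map_sum]
  simp only [map_smul, koszul_fm]
  have key : ∀ j ∈ σᶜ, (((α j : ℝ) * rsgn (insert j σ) j) •
      ∑ i ∈ insert j σ, rsgn ((insert j σ).erase i) i •
        formMonomial (α - Finsupp.single j 1 + Finsupp.single i 1) ((insert j σ).erase i))
      = (α j : ℝ) • formMonomial α σ + ∑ i ∈ σ, -(cross α σ i j) := by
    intro j hj
    have hjσ : j ∉ σ := Finset.mem_compl.mp hj
    rw [Finset.sum_insert hjσ, smul_add, Finset.smul_sum]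
    congr 1
    · have h2 : (insert j σ).erase j = σ := Finset.erase_insert hjσ
      rw [h2]
      by_cases hz : α j = 0
      · simp [hz]
      · have h3 : α - Finsupp.single j 1 + Finsupp.single j 1 = α :=
          tsub_add_cancel_of_le (Finsupp.single_le_iff.mpr (Nat.one_le_iff_ne_zero.mpr hz))
        rw [h3, smul_smul]
        congr 1
        have hs := rsgn_sq σ j
        rw [rsgn_insert_self]
        linear_combination (α j : ℝ) * hs
    · refine Finset.sum_congr rfl fun i hi => ?_
      have hij : i ≠ j := fun h => hjσ (h ▸ hi)
      have hset : (insert j σ).erase i = insert j (σ.erase i) :=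
        Finset.erase_insert_of_ne (Ne.symm hij)
      have hβ : α - Finsupp.single j 1 + Finsupp.single i 1
          = α + Finsupp.single i 1 - Finsupp.single j 1 := by
        ext a
        simp only [Finsupp.add_apply, Finsupp.tsub_apply, Finsupp.single_apply]
        split_ifs with h1 h2 <;> first
          | omega
          | (exfalso; exact hij (by omega))
      rw [smul_smul, hset, hβ, cross, ← neg_smul]
      congr 1
      have hs := sign_cancel_mixed hi hjσ
      rw [hset] at hs
      linear_combination (α j : ℝ) * hs
  rw [Finset.sum_congr rfl key, Finset.sum_add_distrib, Finset.sum_smul, sub_eq_add_neg]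
  congr 1
  rw [Finset.sum_comm, ← Finset.sum_neg_distrib]
  refine Finset.sum_congr rfl fun i _ => ?_
  rw [← Finset.sum_neg_distrib]

lemma homotopy_fm {n : ℕ} (α : Fin n →₀ ℕ) (σ : Finset (Fin n)) :
    extD n (koszul n (formMonomial α σ)) + koszul n (extD n (formMonomial α σ)) =
      ((mdeg α + σ.card : ℕ) : ℝ) • formMonomial α σ := by
  rw [extD_koszul_fm, koszul_extD_fm]
  have : (∑ i ∈ σ, ((α i : ℝ) + 1)) + (∑ j ∈ σᶜ, (α j : ℝ))
      = ((mdeg α + σ.card : ℕ) : ℝ) := by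
    rw [Finset.sum_add_distrib, Finset.sum_const, mdeg_eq]
    push_cast
    rw [← Finset.sum_add_sum_compl σ (fun i => (α i : ℝ))]
    ring
  rw [← this, add_smul]
  abel

lemma mdeg_add_single {n : ℕ} (α : Fin n →₀ ℕ) (i : Fin n) :
    mdeg (α + Finsupp.single i 1) = mdeg α + 1 := by
  rw [mdeg_eq, mdeg_eq]
  have : ∀ a, (α + Finsupp.single i 1 : Fin n →₀ ℕ) a
      = α a + (if a = i then 1 else 0) := by
    intro a
    rw [Finsupp.add_apply, Finsupp.single_apply]
    congr 1
    simp [eq_comm]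
  rw [Finset.sum_congr rfl fun a _ => this a, Finset.sum_add_distrib,
    Finset.sum_ite_eq' Finset.univ i (fun _ => 1), if_pos (Finset.mem_univ i)]

lemma mdeg_sub_single_le {n : ℕ} (α : Fin n →₀ ℕ) (i : Fin n) (r : ℕ)
    (hz : α i ≠ 0) (h : mdeg α ≤ r + 1) : mdeg (α - Finsupp.single i 1) ≤ r := by
  have h4 : (α - Finsupp.single i 1) + Finsupp.single i 1 = α :=
    tsub_add_cancel_of_le (Finsupp.single_le_iff.mpr (Nat.one_le_iff_ne_zero.mpr hz))
  have h5 := mdeg_add_single (α - Finsupp.single i 1) i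
  rw [h4] at h5
  omega

lemma fm_mem_P {n r k : ℕ} {α : Fin n →₀ ℕ} {σ : Finset (Fin n)}
    (h1 : σ.card = k) (h2 : mdeg α ≤ r) : formMonomial α σ ∈ Pspace n r k :=
  Submodule.subset_span ⟨α, σ, h1, h2, rfl⟩

lemma koszul_fm_mem_P {n r k : ℕ} {α : Fin n →₀ ℕ} {σ : Finset (Fin n)}
    (h1 : σ.card = k + 1) (h2 : mdeg α ≤ r) :
    koszul n (formMonomial α σ) ∈ Pspace n (r + 1) k := by
  rw [koszul_fm]
  refine Submodule.sum_mem _ fun i hi => Submodule.smul_mem _ _ (fm_mem_P ?_ ?_)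
  · rw [Finset.card_erase_of_mem hi, h1]; omega
  · rw [mdeg_add_single]; omega

lemma extD_fm_mem_P {n r k : ℕ} {α : Fin n →₀ ℕ} {σ : Finset (Fin n)}
    (h1 : σ.card = k) (h2 : mdeg α ≤ r + 1) :
    extD n (formMonomial α σ) ∈ Pspace n r (k + 1) := by
  rw [extD_fm]
  refine Submodule.sum_mem _ fun i hi => ?_
  by_cases hz : α i = 0
  · simp [hz]
  · refine Submodule.smul_mem _ _ (fm_mem_P ?_ ?_)
    · rw [Finset.card_insert_of_notMem (Finset.mem_compl.mp hi), h1]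
    · exact mdeg_sub_single_le α i r hz h2

lemma map_koszul_P {n r k : ℕ} :
    Submodule.map (koszul n) (Pspace n r (k + 1)) ≤ Pspace n (r + 1) k := by
  rw [Pspace, Submodule.map_span_le]
  rintro ω ⟨α, σ, h1, h2, rfl⟩
  exact koszul_fm_mem_P h1 h2

lemma map_extD_P {n r k : ℕ} :
    Submodule.map (extD n) (Pspace n (r + 1) k) ≤ Pspace n r (k + 1) := by
  rw [Pspace, Submodule.map_span_le]
  rintro ω ⟨α, σ, h1, h2, rfl⟩
  exact extD_fm_mem_P h1 h2

lemma H_le_P {n r k : ℕ} : Hspace n r k ≤ Pspace n r k :=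
  Submodule.span_mono (by rintro ω ⟨α, σ, h1, h2, rfl⟩; exact ⟨α, σ, h1, le_of_eq h2, rfl⟩)

lemma Hl_le_H {n r l k : ℕ} : Hl n r l k ≤ Hspace n r k :=
  Submodule.span_mono (by rintro ω ⟨α, σ, h1, h2, _, rfl⟩; exact ⟨α, σ, h1, h2, rfl⟩)

lemma P_mono {n r r' k : ℕ} (h : r ≤ r') : Pspace n r k ≤ Pspace n r' k :=
  Submodule.span_mono (by rintro ω ⟨α, σ, h1, h2, rfl⟩; exact ⟨α, σ, h1, le_trans h2 h, rfl⟩)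

lemma Hl_mono {n r l l' k : ℕ} (h : l' ≤ l) : Hl n r l k ≤ Hl n r l' k :=
  Submodule.span_mono
    (by rintro ω ⟨α, σ, h1, h2, h3, rfl⟩; exact ⟨α, σ, h1, h2, le_trans h h3, rfl⟩)

lemma koszul_extD_koszul_fm {n : ℕ} (α : Fin n →₀ ℕ) (σ : Finset (Fin n)) :
    koszul n (extD n (koszul n (formMonomial α σ))) =
      ((mdeg α + σ.card : ℕ) : ℝ) • koszul n (formMonomial α σ) := by
  have h0 : extD n (koszul n (koszul n (formMonomial α σ))) = 0 := by
    rw [koszul_koszul_fm, map_zero]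
  have h2 : extD n (koszul n (koszul n (formMonomial α σ)))
      + koszul n (extD n (koszul n (formMonomial α σ)))
      = ((mdeg α + σ.card : ℕ) : ℝ) • koszul n (formMonomial α σ) := by
    rw [koszul_fm]
    simp only [map_sum, map_smul]
    rw [← Finset.sum_add_distrib, Finset.smul_sum]
    refine Finset.sum_congr rfl fun i hi => ?_
    rw [← smul_add, homotopy_fm]
    rw [smul_comm]
    congr 2
    rw [mdeg_add_single, Finset.card_erase_of_mem hi]
    have : 1 ≤ σ.card := Finset.card_pos.mpr ⟨i, hi⟩
    omega
  rw [h0, zero_add] at h2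
  exact h2

lemma extD_extD_kfm {n : ℕ} (α : Fin n →₀ ℕ) (σ : Finset (Fin n)) :
    extD n (extD n (koszul n (formMonomial α σ))) = 0 := by
  rw [koszul_fm]
  simp only [map_sum, map_smul, extD_extD_fm, smul_zero, Finset.sum_const_zero]

/-- `J_{r}Λ^k ⊆ P_{r+1}Λ^k + J_{r+1}Λ^k`. -/
lemma Jspace_mono {n s k : ℕ} :
    Jspace n s k ≤ Pspace n (s + 1) k ⊔ Jspace n (s + 1) k := by
  rw [Jspace]
  refine iSup_le fun l => ?_
  cases l with
  | zero =>
    refine le_trans ?_ le_sup_left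
    refine le_trans (Submodule.map_mono (le_trans Hl_le_H H_le_P)) ?_
    simpa using (map_koszul_P (n := n) (r := s + 0) (k := k))
  | succ l =>
    refine le_trans ?_ le_sup_right
    refine le_trans ?_ (le_iSup
      (fun l => Submodule.map (koszul n) (Hl n (s + 1 + l) (l + 1) (k + 1))) l)
    refine Submodule.map_mono ?_
    have he : s + (l + 1) = s + 1 + l := by omega
    rw [he]
    exact Hl_mono (by omega)

/-- `κ ∘ κ = 0` on `J`-type spaces. -/
lemma map_koszul_koszul {n : ℕ} (s : Set (PolyForm n))
    (hs : ∀ ω ∈ s, ∃ α τ, ω = formMonomial α τ) :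
    Submodule.map (koszul n) (Submodule.map (koszul n) (Submodule.span ℝ s)) = ⊥ := by
  rw [Submodule.map_span, Submodule.map_span]
  refine le_bot_iff.mp (Submodule.span_le.mpr ?_)
  rintro _ ⟨_, ⟨ω, hω, rfl⟩, rfl⟩
  obtain ⟨α, τ, rfl⟩ := hs ω hω
  simp [koszul_koszul_fm]

lemma koszul_Jspace_bot {n r k : ℕ} :
    Submodule.map (koszul n) (Jspace n r k) = ⊥ := by
  rw [Jspace, Submodule.map_iSup]
  refine le_bot_iff.mp (iSup_le fun l => ?_)
  rw [Hl, map_koszul_koszul]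
  rintro ω ⟨α, σ, _, _, _, rfl⟩
  exact ⟨α, σ, rfl⟩

lemma koszul_extD_Jspace {n r k : ℕ} :
    Submodule.map (koszul n) (Submodule.map (extD n) (Jspace n r k)) ≤ Jspace n r k := by
  rw [Jspace, Submodule.map_iSup, Submodule.map_iSup]
  refine iSup_le fun l => ?_
  rw [Hl, Submodule.map_span, Submodule.map_span, Submodule.map_span, Submodule.span_le]
  rintro _ ⟨_, ⟨_, ⟨ω, hω, rfl⟩, rfl⟩, rfl⟩
  obtain ⟨α, σ, h1, h2, h3, rfl⟩ := hω
  rw [koszul_extD_koszul_fm]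
  refine Submodule.smul_mem _ _ ?_
  refine (le_iSup (fun l => Submodule.map (koszul n) (Hl n (r + l) (l + 1) (k + 1))) l) ?_
  exact ⟨formMonomial α σ, Submodule.subset_span ⟨α, σ, h1, h2, h3, rfl⟩, rfl⟩

lemma extD_extD_Jspace {n r k : ℕ} :
    Submodule.map (extD n) (Submodule.map (extD n) (Jspace n r k)) = ⊥ := by
  rw [Jspace, Submodule.map_iSup, Submodule.map_iSup]
  refine le_bot_iff.mp (iSup_le fun l => ?_)
  rw [Hl, Submodule.map_span, Submodule.map_span, Submodule.map_span, Submodule.span_le]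
  rintro _ ⟨_, ⟨_, ⟨ω, hω, rfl⟩, rfl⟩, rfl⟩
  obtain ⟨α, σ, _, _, _, rfl⟩ := hω
  simp [extD_extD_kfm]

/-- `J_{s+1}Λ^k ⊆ κ S_sΛ^{k+1}`. -/
lemma Jspace_le_koszul_S {n s k : ℕ} :
    Jspace n (s + 1) k ≤ Submodule.map (koszul n) (Sspace n s (k + 1)) := by
  rw [Jspace]
  refine iSup_le fun l => ?_
  rw [Hl, Submodule.map_span, Submodule.span_le]
  rintro _ ⟨ω, hω, rfl⟩
  obtain ⟨α, σ, h1, h2, h3, rfl⟩ := hω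
  set N : ℝ := ((mdeg α + σ.card : ℕ) : ℝ) with hN
  have hNz : N ≠ 0 := by
    rw [hN, h1, h2]
    positivity
  have hid := koszul_extD_koszul_fm α σ
  have hkJ : koszul n (formMonomial α σ) ∈ Jspace n (s + 1) k := by
    refine (le_iSup (fun l => Submodule.map (koszul n) (Hl n (s + 1 + l) (l + 1) (k + 1))) l) ?_
    exact ⟨formMonomial α σ, Submodule.subset_span ⟨α, σ, h1, h2, h3, rfl⟩, rfl⟩
  have hdk : extD n (koszul n (formMonomial α σ)) ∈ Sspace n s (k + 1) := by
    rw [Sspace, if_neg (Nat.succ_ne_zero k)]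
    refine le_sup_right (a := Pspace n s (k + 1) ⊔ Jspace n s (k + 1)) ?_
    simp only [Nat.add_sub_cancel]
    exact ⟨koszul n (formMonomial α σ), hkJ, rfl⟩
  refine ⟨N⁻¹ • extD n (koszul n (formMonomial α σ)), Submodule.smul_mem _ _ hdk, ?_⟩
  rw [map_smul, hid, ← hN, smul_smul, inv_mul_cancel₀ hNz, one_smul]

/-- `P_{s+1}Λ^0 ⊆ P_sΛ^0 + κ P_sΛ^1`. -/
lemma P_decomp_zero {n s : ℕ} :
    Pspace n (s + 1) 0 ≤ Pspace n s 0 ⊔ Submodule.map (koszul n) (Pspace n s 1) := by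
  rw [Pspace, Submodule.span_le]
  rintro _ ⟨α, σ, h1, h2, rfl⟩
  rcases Nat.eq_zero_or_pos (mdeg α) with hm | hm
  · exact le_sup_left (a := Pspace n s 0) (fm_mem_P h1 (by omega))
  · have hσ : σ = ∅ := Finset.card_eq_zero.mp h1
    have hκ : koszul n (formMonomial α σ) = 0 := by
      rw [koszul_fm, hσ, Finset.sum_empty]
    have hh := homotopy_fm α σ
    rw [hκ, map_zero, zero_add] at hh
    have hNz : ((mdeg α + σ.card : ℕ) : ℝ) ≠ 0 := by
      rw [h1]
      positivity
    have hfm : formMonomial α σ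
        = koszul n (((mdeg α + σ.card : ℕ) : ℝ)⁻¹ • extD n (formMonomial α σ)) := by
      rw [map_smul, hh, smul_smul, inv_mul_cancel₀ hNz, one_smul]
    refine le_sup_right (a := Pspace n s 0) ?_
    rw [hfm]
    refine ⟨_, Submodule.smul_mem _ _ (extD_fm_mem_P h1 h2), rfl⟩

/-- `P_{s+1}Λ^{k+1} ⊆ d P_{s+2}Λ^k + κ P_sΛ^{k+2}`. -/
lemma P_decomp_succ {n s k : ℕ} :
    Pspace n (s + 1) (k + 1) ≤
      Submodule.map (extD n) (Pspace n (s + 2) k) ⊔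
        Submodule.map (koszul n) (Pspace n s (k + 2)) := by
  rw [Pspace, Submodule.span_le]
  rintro _ ⟨α, σ, h1, h2, rfl⟩
  have hNz : ((mdeg α + σ.card : ℕ) : ℝ) ≠ 0 := by
    rw [h1]
    positivity
  have hh := homotopy_fm α σ
  have hfm : formMonomial α σ
      = extD n (((mdeg α + σ.card : ℕ) : ℝ)⁻¹ • koszul n (formMonomial α σ))
        + koszul n (((mdeg α + σ.card : ℕ) : ℝ)⁻¹ • extD n (formMonomial α σ)) := by
    rw [map_smul, map_smul, ← smul_add, hh, smul_smul, inv_mul_cancel₀ hNz, one_smul]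
  rw [SetLike.mem_coe, hfm]
  refine add_mem (le_sup_left (a := Submodule.map (extD n) (Pspace n (s + 2) k)) ?_)
    (le_sup_right (a := Submodule.map (extD n) (Pspace n (s + 2) k)) ?_)
  · exact ⟨_, Submodule.smul_mem _ _ (koszul_fm_mem_P h1 (by omega)), rfl⟩
  · exact ⟨_, Submodule.smul_mem _ _ (extD_fm_mem_P h1 h2), rfl⟩

lemma P_le_S {n r k : ℕ} : Pspace n r k ≤ Sspace n r k :=
  le_trans le_sup_left (le_sup_left (b := if k = 0 then ⊥ else
    Submodule.map (extD n) (Jspace n (r + 1) (k - 1))))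

lemma J_le_S {n r k : ℕ} : Jspace n r k ≤ Sspace n r k :=
  le_trans le_sup_right (le_sup_left (b := if k = 0 then ⊥ else
    Submodule.map (extD n) (Jspace n (r + 1) (k - 1))))

/-- `d J_{s+1}Λ^k ⊆ S_{s+1}Λ^{k+1}`. -/
lemma extD_J_le_S {n s k : ℕ} :
    Submodule.map (extD n) (Jspace n (s + 1) k) ≤ Sspace n (s + 1) (k + 1) := by
  refine le_trans (Submodule.map_mono Jspace_mono) ?_
  rw [Submodule.map_sup]
  refine sup_le (le_trans map_extD_P P_le_S) ?_
  rw [Sspace, if_neg (Nat.succ_ne_zero k)]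
  refine le_trans ?_ (le_sup_right (a := Pspace n (s + 1) (k + 1) ⊔ Jspace n (s + 1) (k + 1)))
  simp only [Nat.add_sub_cancel]
  exact le_refl _

lemma Sspace_mono {n s k : ℕ} : Sspace n s k ≤ Sspace n (s + 1) k := by
  rw [Sspace]
  refine sup_le (sup_le (le_trans (P_mono (by omega)) P_le_S)
    (le_trans Jspace_mono (sup_le P_le_S J_le_S))) ?_
  cases k with
  | zero => simp
  | succ k =>
    rw [if_neg (Nat.succ_ne_zero k)]
    simp only [Nat.add_sub_cancel]
    exact extD_J_le_S

lemma koszul_S_le_S {n s k : ℕ} :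
    Submodule.map (koszul n) (Sspace n s (k + 1)) ≤ Sspace n (s + 1) k := by
  rw [Sspace, Submodule.map_sup, Submodule.map_sup]
  refine sup_le (sup_le (le_trans map_koszul_P P_le_S) ?_) ?_
  · rw [koszul_Jspace_bot]
    exact bot_le
  · rw [if_neg (Nat.succ_ne_zero k)]
    simp only [Nat.add_sub_cancel]
    exact le_trans koszul_extD_Jspace J_le_S

lemma extD_S_le_S {n s k : ℕ} :
    Submodule.map (extD n) (Sspace n (s + 2) k) ≤ Sspace n (s + 1) (k + 1) := by
  rw [Sspace, Submodule.map_sup, Submodule.map_sup]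
  refine sup_le (sup_le (le_trans map_extD_P P_le_S) ?_) ?_
  · rw [Sspace, if_neg (Nat.succ_ne_zero k)]
    refine le_trans ?_ (le_sup_right (a := Pspace n (s + 1) (k + 1) ⊔ Jspace n (s + 1) (k + 1)))
    simp only [Nat.add_sub_cancel]
    exact le_refl _
  · cases k with
    | zero => simp
    | succ k =>
      rw [if_neg (Nat.succ_ne_zero k)]
      simp only [Nat.add_sub_cancel]
      rw [extD_extD_Jspace]
      exact bot_le

lemma Pspace_bot {n t k : ℕ} (h : n < k) : Pspace n t k = ⊥ := by
  refine le_bot_iff.mp ?_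
  rw [Pspace, Submodule.span_le]
  rintro _ ⟨α, σ, h1, _, rfl⟩
  exfalso
  have := Finset.card_le_univ σ
  rw [Fintype.card_fin] at this
  omega

lemma Hl_bot {n r l k : ℕ} (h : n < k) : Hl n r l k = ⊥ := by
  refine le_bot_iff.mp ?_
  rw [Hl, Submodule.span_le]
  rintro _ ⟨α, σ, h1, _, _, rfl⟩
  exfalso
  have := Finset.card_le_univ σ
  rw [Fintype.card_fin] at this
  omega

lemma Jspace_bot {n t k : ℕ} (h : n ≤ k) : Jspace n t k = ⊥ := by
  refine le_bot_iff.mp ?_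
  rw [Jspace]
  refine iSup_le fun l => ?_
  rw [Hl_bot (by omega), Submodule.map_bot]

lemma Sspace_bot {n t k : ℕ} (h : n < k) : Sspace n t k = ⊥ := by
  refine le_bot_iff.mp ?_
  rw [Sspace, Pspace_bot h, Jspace_bot (by omega)]
  cases k with
  | zero => omega
  | succ k =>
    rw [if_neg (Nat.succ_ne_zero k)]
    simp only [Nat.add_sub_cancel]
    rw [Jspace_bot (by omega), Submodule.map_bot]
    simp

/-- The general statement (iii) for `r = s + 1`. -/
lemma Sminus_step {n s : ℕ} (k : ℕ) :
    (Sspace n s k ⊔ Submodule.map (koszul n) (Sspace n s (k + 1))) ⊔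
      (if k = 0 then ⊥ else Submodule.map (extD n) (Sspace n (s + 2) (k - 1))) =
      Sspace n (s + 1) k := by
  refine le_antisymm ?_ ?_
  · refine sup_le (sup_le Sspace_mono koszul_S_le_S) ?_
    cases k with
    | zero => simp
    | succ k =>
      rw [if_neg (Nat.succ_ne_zero k)]
      simp only [Nat.add_sub_cancel]
      exact extD_S_le_S
  · rw [Sspace]
    refine sup_le (sup_le ?_ ?_) ?_
    · -- P part
      cases k with
      | zero =>
        refine le_trans P_decomp_zero ?_
        refine le_trans (sup_le_sup P_le_S (Submodule.map_mono P_le_S)) ?_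
        exact le_sup_left
      | succ k =>
        refine le_trans P_decomp_succ ?_
        rw [if_neg (Nat.succ_ne_zero k)]
        simp only [Nat.add_sub_cancel]
        refine sup_le ?_ ?_
        · exact le_trans (Submodule.map_mono P_le_S) le_sup_right
        · exact le_trans (Submodule.map_mono P_le_S) (le_trans le_sup_right le_sup_left)
    · -- J part
      exact le_trans Jspace_le_koszul_S (le_trans le_sup_right le_sup_left)
    · -- dJ part
      cases k with
      | zero => simp
      | succ k =>
        rw [if_neg (Nat.succ_ne_zero k)]
        simp only [Nat.add_sub_cancel]
        exact le_trans (Submodule.map_mono J_le_S) le_sup_right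

/-- (i) `S_r^-Λ^0 = S_rΛ^0`; (ii) `S_r^-Λ^n = S_{r-1}Λ^n`;
(iii) `S_r^-Λ^k + dS_{r+1}Λ^{k-1} = S_rΛ^k` (the `d`-term being zero for `k = 0`). -/
theorem Sminus_alternatives (n r : ℕ) (hn : 1 ≤ n) (hr : 1 ≤ r) :
    SminusSpace n r 0 = Sspace n r 0 ∧
    SminusSpace n r n = Sspace n (r - 1) n ∧
    (∀ k, SminusSpace n r k ⊔
      (if k = 0 then ⊥ else Submodule.map (extD n) (Sspace n (r + 1) (k - 1))) =
      Sspace n r k) := by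
  obtain ⟨s, rfl⟩ : ∃ s, r = s + 1 := ⟨r - 1, by omega⟩
  have hiii : ∀ k, SminusSpace n (s + 1) k ⊔
      (if k = 0 then ⊥ else Submodule.map (extD n) (Sspace n (s + 1 + 1) (k - 1))) =
      Sspace n (s + 1) k := by
    intro k
    rw [SminusSpace]
    simp only [Nat.add_sub_cancel]
    exact Sminus_step k
  refine ⟨?_, ?_, hiii⟩
  · have := hiii 0
    rw [if_pos rfl, sup_bot_eq] at this
    exact this
  · rw [SminusSpace]
    simp only [Nat.add_sub_cancel]
    rw [Sspace_bot (n := n) (t := s) (k := n + 1) (by omega), Submodule.map_bot, sup_bot_eq]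
end

section
/- (Exactness of the trimmed serendipity complex) For n, r ≥ 1, the sequence 0 → ℝ → S_r^−Λ^0(ℝ^n) →d S_r^−Λ^1(ℝ^n) →d ⋯ →d S_r^−Λ^n(ℝ^n) → 0 is exact: every ω ∈ S_r^−Λ^k with dω = 0 (and, for k = 0, with ω not constant removed via the augmentation) equals dμ for some μ ∈ S_r^−Λ^{k−1}. -/
open MvPolynomial

/-! ### Auxiliary lemmas -/

section Aux

open Finset in
lemma sgn_mul_self {n : ℕ} (σ : Finset (Fin n)) (i : Fin n) :
    sgn σ i * sgn σ i = 1 := by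
  unfold sgn
  rw [← pow_add]
  exact Even.neg_one_pow ⟨_, rfl⟩

lemma sgn_insert {n : ℕ} {σ : Finset (Fin n)} {j : Fin n} (hj : j ∉ σ) (i : Fin n) :
    sgn (insert j σ) i = (if j < i then (-1 : MvPolynomial (Fin n) ℝ) else 1) * sgn σ i := by
  unfold sgn
  rw [Finset.filter_insert]
  split
  · rw [Finset.card_insert_of_notMem (fun h => hj (Finset.mem_of_mem_filter j h)), pow_succ]
    ring
  · rw [one_mul]

lemma sgn_insert_self {n : ℕ} (σ : Finset (Fin n)) (i : Fin n) :
    sgn (insert i σ) i = sgn σ i := by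
  unfold sgn
  rw [Finset.filter_insert, if_neg (lt_irrefl i)]

lemma sgn_erase_self {n : ℕ} (σ : Finset (Fin n)) (i : Fin n) :
    sgn (σ.erase i) i = sgn σ i := by
  unfold sgn
  rw [Finset.filter_erase, Finset.erase_eq_of_notMem]
  intro h
  exact absurd (Finset.mem_filter.1 h).2 (lt_irrefl i)

/-- Antisymmetry of signs for double-insertion (used for `κ ∘ κ = 0`). -/
lemma sgn_swap {n : ℕ} {σ : Finset (Fin n)} {i j : Fin n} (hij : i ≠ j)
    (hi : i ∉ σ) (hj : j ∉ σ) :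
    sgn σ i * sgn (insert i σ) j = -(sgn σ j * sgn (insert j σ) i) := by
  rw [sgn_insert hi, sgn_insert hj]
  rcases lt_or_gt_of_ne hij with h | h
  · rw [if_pos h, if_neg (asymm h)]; ring
  · rw [if_neg (asymm h), if_pos h]; ring

/-- Antisymmetry of signs for the cross terms in the homotopy formula. -/
lemma sgn_cross {n : ℕ} {σ : Finset (Fin n)} {i j : Fin n}
    (hi : i ∈ σ) (hj : j ∉ σ) :
    sgn σ i * sgn (σ.erase i) j = -(sgn σ j * sgn (insert j σ) i) := by
  have hij : i ≠ j := fun h => hj (h ▸ hi)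
  have h1 : sgn σ i = sgn (σ.erase i) i := (sgn_erase_self σ i).symm
  have h2 : sgn σ j = (if i < j then (-1 : MvPolynomial (Fin n) ℝ) else 1) * sgn (σ.erase i) j := by
    conv_lhs => rw [← Finset.insert_erase hi]
    exact sgn_insert (Finset.notMem_erase i σ) j
  have h3 : sgn (insert j σ) i =
      (if j < i then (-1 : MvPolynomial (Fin n) ℝ) else 1) * sgn σ i := sgn_insert hj i
  rw [h2, h3, h1]
  rcases lt_or_gt_of_ne hij with h | h
  · rw [if_pos h, if_neg (asymm h)]; ring
  · rw [if_neg (asymm h), if_pos h]; ring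

lemma sgn_eq_C {n : ℕ} (σ : Finset (Fin n)) (i : Fin n) :
    sgn σ i = C ((-1 : ℝ) ^ (σ.filter (fun j => j < i)).card) := by
  unfold sgn
  rw [map_pow, map_neg, map_one]

lemma pderiv_sgn_mul {n : ℕ} (σ : Finset (Fin n)) (i t : Fin n) (p : MvPolynomial (Fin n) ℝ) :
    pderiv t (sgn σ i * p) = sgn σ i * pderiv t p := by
  rw [sgn_eq_C, pderiv_C_mul]

end Aux
section Aux2

variable {n : ℕ}

lemma extD_apply (ω : PolyForm n) (σ : Finset (Fin n)) :
    extD n ω σ = ∑ i ∈ σ, sgn σ i * pderiv i (ω (σ.erase i)) := rfl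

lemma koszul_apply (ω : PolyForm n) (σ : Finset (Fin n)) :
    koszul n ω σ = ∑ i ∈ σᶜ, sgn σ i * X i * ω (insert i σ) := rfl

lemma extD_koszul_apply (ω : PolyForm n) (σ : Finset (Fin n)) :
    extD n (koszul n ω) σ
      = ∑ i ∈ σ, (ω σ + X i * pderiv i (ω σ))
        + ∑ i ∈ σ, ∑ j ∈ σᶜ,
            sgn σ i * sgn (σ.erase i) j * (X j * pderiv i (ω (insert j (σ.erase i)))) := by
  have key : ∀ i ∈ σ, sgn σ i * pderiv i (koszul n ω (σ.erase i))
      = (ω σ + X i * pderiv i (ω σ))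
        + ∑ j ∈ σᶜ, sgn σ i * sgn (σ.erase i) j * (X j * pderiv i (ω (insert j (σ.erase i)))) := by
    intro i hi
    rw [koszul_apply, Finset.compl_erase, Finset.sum_insert (by simpa using hi),
      Finset.insert_erase hi, sgn_erase_self, map_add, map_sum, mul_add, Finset.mul_sum]
    congr 1
    · rw [mul_assoc, pderiv_sgn_mul, pderiv_mul, pderiv_X_self]
      linear_combination (1 * ω σ + X i * pderiv i (ω σ)) * sgn_mul_self σ i
    · refine Finset.sum_congr rfl fun j hj => ?_
      have hji : j ≠ i := fun h => (Finset.mem_compl.1 hj) (h ▸ hi)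
      rw [mul_assoc, pderiv_sgn_mul, pderiv_mul, pderiv_X_of_ne hji]
      ring
  rw [extD_apply, Finset.sum_congr rfl key, Finset.sum_add_distrib]

lemma koszul_extD_apply (ω : PolyForm n) (σ : Finset (Fin n)) :
    koszul n (extD n ω) σ
      = ∑ j ∈ σᶜ, X j * pderiv j (ω σ)
        - ∑ i ∈ σ, ∑ j ∈ σᶜ,
            sgn σ i * sgn (σ.erase i) j * (X j * pderiv i (ω (insert j (σ.erase i)))) := by
  have key : ∀ j ∈ σᶜ, sgn σ j * X j * extD n ω (insert j σ)
      = X j * pderiv j (ω σ)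
        - ∑ i ∈ σ, sgn σ i * sgn (σ.erase i) j * (X j * pderiv i (ω (insert j (σ.erase i)))) := by
    intro j hj
    have hj' : j ∉ σ := Finset.mem_compl.1 hj
    rw [extD_apply, Finset.sum_insert hj', Finset.erase_insert hj', sgn_insert_self,
      mul_add, Finset.mul_sum]
    have diag : sgn σ j * X j * (sgn σ j * pderiv j (ω σ)) = X j * pderiv j (ω σ) := by
      linear_combination (X j * pderiv j (ω σ)) * sgn_mul_self σ j
    have cross : ∀ i ∈ σ, sgn σ j * X j * (sgn (insert j σ) i * pderiv i (ω ((insert j σ).erase i)))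
        = -(sgn σ i * sgn (σ.erase i) j * (X j * pderiv i (ω (insert j (σ.erase i))))) := by
      intro i hi
      have hji : j ≠ i := fun h => hj' (h ▸ hi)
      rw [Finset.erase_insert_of_ne hji]
      linear_combination (X j * pderiv i (ω (insert j (σ.erase i)))) * sgn_cross hi hj'
    rw [diag, Finset.sum_congr rfl cross, Finset.sum_neg_distrib, ← sub_eq_add_neg]
  rw [koszul_apply, Finset.sum_congr rfl key, Finset.sum_sub_distrib, Finset.sum_comm]

/-- The pointwise homotopy identity `(dκ + κd)ω(σ) = #σ·ω(σ) + Σᵢ xᵢ ∂ᵢ ω(σ)`. -/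
lemma homotopy_apply (ω : PolyForm n) (σ : Finset (Fin n)) :
    extD n (koszul n ω) σ + koszul n (extD n ω) σ
      = (σ.card : MvPolynomial (Fin n) ℝ) * ω σ + ∑ i : Fin n, X i * pderiv i (ω σ) := by
  rw [extD_koszul_apply, koszul_extD_apply,
    ← Finset.sum_add_sum_compl σ (fun i => X i * pderiv i (ω σ)),
    Finset.sum_add_distrib, Finset.sum_const, nsmul_eq_mul]
  ring

lemma sum_erase_antisymm {s : Finset (Fin n)} (f : Fin n → Fin n → MvPolynomial (Fin n) ℝ)
    (hf : ∀ i ∈ s, ∀ j ∈ s, i ≠ j → f j i = - f i j) :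
    ∑ i ∈ s, ∑ j ∈ s.erase i, f i j = 0 := by
  have hswap : (∑ i ∈ s, ∑ j ∈ s.erase i, f i j) = ∑ j ∈ s, ∑ i ∈ s.erase j, f i j := by
    refine Finset.sum_comm' fun x y => ?_
    simp only [Finset.mem_erase]
    constructor
    · rintro ⟨hx, hyx, hy⟩; exact ⟨⟨fun h => hyx h.symm, hx⟩, hy⟩
    · rintro ⟨⟨hxy, hx⟩, hy⟩; exact ⟨hx, fun h => hxy h.symm, hy⟩
  have hneg : (∑ j ∈ s, ∑ i ∈ s.erase j, f i j) = -∑ i ∈ s, ∑ j ∈ s.erase i, f i j := by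
    rw [← Finset.sum_neg_distrib]
    refine Finset.sum_congr rfl fun j hj => ?_
    rw [← Finset.sum_neg_distrib]
    refine Finset.sum_congr rfl fun i hi => ?_
    exact hf j hj i (Finset.mem_of_mem_erase hi) (fun h => (Finset.mem_erase.1 hi).1 h.symm)
  have h2 : (2 : ℝ) • (∑ i ∈ s, ∑ j ∈ s.erase i, f i j) = 0 := by
    rw [two_smul]
    nth_rewrite 1 [hswap]
    rw [hneg, neg_add_cancel]
  have h3 := congrArg (fun x => (2⁻¹ : ℝ) • x) h2
  simpa [smul_smul] using h3

lemma koszul_koszul (ω : PolyForm n) : koszul n (koszul n ω) = 0 := by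
  funext σ
  rw [koszul_apply, Pi.zero_apply]
  have key : ∀ i ∈ σᶜ, sgn σ i * X i * koszul n ω (insert i σ)
      = ∑ j ∈ σᶜ.erase i,
          sgn σ i * sgn (insert i σ) j * (X i * X j * ω (insert j (insert i σ))) := by
    intro i hi
    rw [koszul_apply, Finset.compl_insert, Finset.mul_sum]
    refine Finset.sum_congr rfl fun j hj => ?_
    ring
  rw [Finset.sum_congr rfl key]
  have hf' : ∀ i ∈ σᶜ, ∀ j ∈ σᶜ, i ≠ j →
      sgn σ j * sgn (insert j σ) i * (X j * X i * ω (insert i (insert j σ)))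
        = -(sgn σ i * sgn (insert i σ) j * (X i * X j * ω (insert j (insert i σ)))) := by
    intro i hi j hj hij
    have hi' : i ∉ σ := Finset.mem_compl.1 hi
    have hj' : j ∉ σ := Finset.mem_compl.1 hj
    rw [Finset.insert_comm]
    linear_combination (X i * X j * ω (insert j (insert i σ))) * sgn_swap hij hi' hj'
  exact sum_erase_antisymm _ hf'

end Aux2
section Aux3

variable {n : ℕ}

lemma degree_eq_sum_univ (d : Fin n →₀ ℕ) : d.degree = ∑ i, d i := by
  rw [Finsupp.degree]
  exact Finset.sum_subset (Finset.subset_univ _)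
    (fun x _ hx => by simpa using Finsupp.notMem_support_iff.1 hx)

lemma degree_add (d e : Fin n →₀ ℕ) : (d + e).degree = d.degree + e.degree := by
  simp [degree_eq_sum_univ, Finset.sum_add_distrib]

lemma degree_single (i : Fin n) (m : ℕ) : (Finsupp.single i m).degree = m := by
  simp [degree_eq_sum_univ, Finsupp.single_apply]

lemma mdeg_eq_degree (α : Fin n →₀ ℕ) : mdeg α = α.degree := rfl

lemma hc_monomial (m : ℕ) (d : Fin n →₀ ℕ) (c : ℝ) :
    homogeneousComponent m (monomial d c) = if m = d.degree then monomial d c else 0 :=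
  homogeneousComponent_of_mem ((mem_homogeneousSubmodule _ _).2 (isHomogeneous_monomial c rfl))

lemma degree_sub_single {d : Fin n →₀ ℕ} {i : Fin n} (h : d i ≠ 0) :
    (d - Finsupp.single i 1).degree + 1 = d.degree := by
  have hle : Finsupp.single i 1 ≤ d := Finsupp.single_le_iff.2 (Nat.one_le_iff_ne_zero.2 h)
  have : (d - Finsupp.single i 1) + Finsupp.single i 1 = d := tsub_add_cancel_of_le hle
  calc (d - Finsupp.single i 1).degree + 1
      = (d - Finsupp.single i 1).degree + (Finsupp.single i (1:ℕ)).degree := by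
        rw [degree_single]
    _ = ((d - Finsupp.single i 1) + Finsupp.single i 1).degree := (degree_add _ _).symm
    _ = d.degree := by rw [this]

lemma hc_pderiv (m : ℕ) (i : Fin n) (p : MvPolynomial (Fin n) ℝ) :
    homogeneousComponent m (pderiv i p) = pderiv i (homogeneousComponent (m + 1) p) := by
  induction p using MvPolynomial.induction_on' with
  | monomial d a =>
    rw [pderiv_monomial, hc_monomial, hc_monomial]
    by_cases h0 : d i = 0
    · simp [h0]
      split_ifs <;> simp [pderiv_monomial, h0]
    · have hdeg := degree_sub_single h0
      by_cases hm : m + 1 = d.degree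
      · rw [if_pos hm, if_pos (by omega), pderiv_monomial]
      · rw [if_neg hm, if_neg (by omega), map_zero]
  | add p q hp hq => simp [map_add, hp, hq]

lemma X_eq_monomial (i : Fin n) :
    (X i : MvPolynomial (Fin n) ℝ) = monomial (Finsupp.single i 1) 1 := by
  rw [← X_pow_eq_monomial, pow_one]

lemma hc_X_mul (m : ℕ) (i : Fin n) (p : MvPolynomial (Fin n) ℝ) :
    homogeneousComponent (m + 1) (X i * p) = X i * homogeneousComponent m p := by
  induction p using MvPolynomial.induction_on' with
  | monomial d a =>
    rw [X_eq_monomial, monomial_mul, one_mul, hc_monomial, hc_monomial, degree_add, degree_single]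
    by_cases hm : m = d.degree
    · rw [if_pos (by omega), if_pos hm, monomial_mul, one_mul]
    · rw [if_neg (by omega), if_neg hm, mul_zero]
  | add p q hp hq => simp [map_add, mul_add, hp, hq]

lemma hc_zero_X_mul (i : Fin n) (p : MvPolynomial (Fin n) ℝ) :
    homogeneousComponent 0 (X i * p) = 0 := by
  induction p using MvPolynomial.induction_on' with
  | monomial d a =>
    rw [X_eq_monomial, monomial_mul, one_mul, hc_monomial, degree_add, degree_single]
    rw [if_neg (by omega)]
  | add p q hp hq => simp [map_add, mul_add, hp, hq]

lemma X_mul_pderiv_monomial (i : Fin n) (d : Fin n →₀ ℕ) (a : ℝ) :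
    X i * pderiv i (monomial d a) = monomial d (a * d i) := by
  rw [pderiv_monomial]
  by_cases h0 : d i = 0
  · simp [h0]
  · have hle : Finsupp.single i 1 ≤ d := Finsupp.single_le_iff.2 (Nat.one_le_iff_ne_zero.2 h0)
    rw [X_eq_monomial, monomial_mul, one_mul, add_tsub_cancel_of_le hle]

/-- Euler's identity for homogeneous components. -/
lemma euler_hc (m : ℕ) (p : MvPolynomial (Fin n) ℝ) :
    ∑ i : Fin n, X i * pderiv i (homogeneousComponent m p)
      = (m : ℝ) • homogeneousComponent m p := by
  induction p using MvPolynomial.induction_on' with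
  | monomial d a =>
    rw [hc_monomial]
    by_cases hm : m = d.degree
    · rw [if_pos hm]
      have : ∀ i ∈ Finset.univ, X i * pderiv i (monomial d a) = monomial d (a * d i) :=
        fun i _ => X_mul_pderiv_monomial i d a
      rw [Finset.sum_congr rfl this, ← map_sum (monomial d), smul_monomial]
      congr 1
      rw [smul_eq_mul, ← Finset.mul_sum, hm, degree_eq_sum_univ]
      push_cast
      ring
    · rw [if_neg hm]
      simp
  | add p q hp hq => simp [map_add, mul_add, Finset.sum_add_distrib, smul_add, hp, hq]

end Aux3
section Aux4

variable {n : ℕ}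

/-- Projection onto the homogeneous component of degree `m`, coefficientwise. -/
noncomputable def piComp (n m : ℕ) : PolyForm n →ₗ[ℝ] PolyForm n where
  toFun ω := fun σ => homogeneousComponent m (ω σ)
  map_add' ω η := by funext σ; simp [Pi.add_apply]
  map_smul' c ω := by funext σ; simp [Pi.smul_apply]

lemma piComp_apply (m : ℕ) (ω : PolyForm n) (σ : Finset (Fin n)) :
    piComp n m ω σ = homogeneousComponent m (ω σ) := rfl

lemma piComp_comp_extD (m : ℕ) :
    (piComp n m).comp (extD n) = (extD n).comp (piComp n (m + 1)) := by
  refine LinearMap.ext fun ω => ?_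
  funext σ
  show homogeneousComponent m (extD n ω σ) = extD n (piComp n (m + 1) ω) σ
  rw [extD_apply, extD_apply, map_sum]
  refine Finset.sum_congr rfl fun i _ => ?_
  rw [sgn_eq_C, homogeneousComponent_C_mul, hc_pderiv, piComp_apply]

lemma piComp_comp_koszul (m : ℕ) :
    (piComp n (m + 1)).comp (koszul n) = (koszul n).comp (piComp n m) := by
  refine LinearMap.ext fun ω => ?_
  funext σ
  show homogeneousComponent (m + 1) (koszul n ω σ) = koszul n (piComp n m ω) σ
  rw [koszul_apply, koszul_apply, map_sum]
  refine Finset.sum_congr rfl fun i _ => ?_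
  rw [mul_assoc, sgn_eq_C, homogeneousComponent_C_mul, hc_X_mul, piComp_apply, mul_assoc]

lemma piComp_zero_comp_koszul : (piComp n 0).comp (koszul n) = 0 := by
  refine LinearMap.ext fun ω => ?_
  funext σ
  show homogeneousComponent 0 (koszul n ω σ) = 0
  rw [koszul_apply, map_sum]
  refine Finset.sum_eq_zero fun i _ => ?_
  rw [mul_assoc, sgn_eq_C, homogeneousComponent_C_mul, hc_zero_X_mul, mul_zero]

lemma extD_piComp_zero (ω : PolyForm n) : extD n (piComp n 0 ω) = 0 := by
  funext σ
  rw [extD_apply, Pi.zero_apply]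
  refine Finset.sum_eq_zero fun i _ => ?_
  rw [piComp_apply, homogeneousComponent_zero, pderiv_C, mul_zero]

lemma mem_Lambda {k : ℕ} {ω : PolyForm n} :
    ω ∈ Lambda n k ↔ ∀ σ, σ.card ≠ k → ω σ = 0 := Iff.rfl

lemma extD_mem_Lambda {k : ℕ} {ω : PolyForm n} (h : ω ∈ Lambda n k) :
    extD n ω ∈ Lambda n (k + 1) := by
  rw [mem_Lambda] at h ⊢
  intro σ hσ
  rw [extD_apply]
  refine Finset.sum_eq_zero fun i hi => ?_
  have h1 : 1 ≤ σ.card := Finset.card_pos.2 ⟨i, hi⟩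
  have h2 := Finset.card_erase_of_mem hi
  rw [h _ (by omega), map_zero, mul_zero]

lemma koszul_mem_Lambda {k : ℕ} {ω : PolyForm n} (h : ω ∈ Lambda n (k + 1)) :
    koszul n ω ∈ Lambda n k := by
  rw [mem_Lambda] at h ⊢
  intro σ hσ
  rw [koszul_apply]
  refine Finset.sum_eq_zero fun i hi => ?_
  have h2 := Finset.card_insert_of_notMem (Finset.mem_compl.1 hi)
  rw [h _ (by omega), mul_zero]

lemma piComp_mem_Lambda {k m : ℕ} {ω : PolyForm n} (h : ω ∈ Lambda n k) :
    piComp n m ω ∈ Lambda n k := by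
  rw [mem_Lambda] at h ⊢
  intro σ hσ
  rw [piComp_apply, h _ hσ, map_zero]

lemma formMonomial_mem_Lambda {k : ℕ} {α : Fin n →₀ ℕ} {σ : Finset (Fin n)}
    (h : σ.card = k) : formMonomial α σ ∈ Lambda n k := by
  rw [mem_Lambda]
  intro τ hτ
  unfold formMonomial
  rw [if_neg (fun ht => hτ (by rw [ht]; exact h))]

lemma Pspace_le_Lambda {r k : ℕ} : Pspace n r k ≤ Lambda n k := by
  refine Submodule.span_le.2 ?_
  rintro ω ⟨α, σ, hσ, _, rfl⟩
  exact formMonomial_mem_Lambda hσ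

lemma Hspace_le_Lambda {r k : ℕ} : Hspace n r k ≤ Lambda n k := by
  refine Submodule.span_le.2 ?_
  rintro ω ⟨α, σ, hσ, _, rfl⟩
  exact formMonomial_mem_Lambda hσ

lemma Hl_le_Lambda {r l k : ℕ} : Hl n r l k ≤ Lambda n k := by
  refine Submodule.span_le.2 ?_
  rintro ω ⟨α, σ, hσ, _, _, rfl⟩
  exact formMonomial_mem_Lambda hσ

lemma Jspace_le_Lambda {r k : ℕ} : Jspace n r k ≤ Lambda n k := by
  refine iSup_le fun l => ?_
  rintro x ⟨y, hy, rfl⟩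
  exact koszul_mem_Lambda (Hl_le_Lambda hy)

lemma Sspace_le_Lambda {r k : ℕ} : Sspace n r k ≤ Lambda n k := by
  refine sup_le (sup_le Pspace_le_Lambda Jspace_le_Lambda) ?_
  split_ifs with hk
  · exact bot_le
  · rintro x ⟨y, hy, rfl⟩
    have hk1 : k - 1 + 1 = k := by omega
    have := extD_mem_Lambda (Jspace_le_Lambda hy)
    rwa [hk1] at this
  
lemma Sminus_le_Lambda {r k : ℕ} : SminusSpace n r k ≤ Lambda n k := by
  refine sup_le Sspace_le_Lambda ?_
  rintro x ⟨y, hy, rfl⟩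
  exact koszul_mem_Lambda (Sspace_le_Lambda hy)

lemma piComp_formMonomial (m : ℕ) (α : Fin n →₀ ℕ) (σ : Finset (Fin n)) :
    piComp n m (formMonomial α σ) = if m = mdeg α then formMonomial α σ else 0 := by
  by_cases hm : m = mdeg α
  · rw [if_pos hm]
    funext τ
    rw [piComp_apply]
    unfold formMonomial
    by_cases h : τ = σ
    · rw [if_pos h, hc_monomial, if_pos (by rw [← mdeg_eq_degree]; exact hm)]
    · rw [if_neg h, map_zero]
  · rw [if_neg hm]
    funext τ
    rw [piComp_apply, Pi.zero_apply]
    unfold formMonomial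
    by_cases h : τ = σ
    · rw [if_pos h, hc_monomial, if_neg (by rw [← mdeg_eq_degree]; exact hm)]
    · rw [if_neg h, map_zero]

lemma piComp_Pspace {r k : ℕ} (m : ℕ) :
    Submodule.map (piComp n m) (Pspace n r k) ≤ Pspace n r k := by
  rw [Pspace, Submodule.map_span]
  refine Submodule.span_le.2 ?_
  rintro x ⟨ω, ⟨α, σ, hσ, hα, rfl⟩, rfl⟩
  rw [piComp_formMonomial]
  split_ifs
  · exact Submodule.subset_span ⟨α, σ, hσ, hα, rfl⟩
  · exact (Submodule.span ℝ _).zero_mem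

lemma piComp_Hl {r l k : ℕ} (m : ℕ) :
    Submodule.map (piComp n m) (Hl n r l k) ≤ Hl n r l k := by
  rw [Hl, Submodule.map_span]
  refine Submodule.span_le.2 ?_
  rintro x ⟨ω, ⟨α, σ, hσ, hα, hl, rfl⟩, rfl⟩
  rw [piComp_formMonomial]
  split_ifs
  · exact Submodule.subset_span ⟨α, σ, hσ, hα, hl, rfl⟩
  · exact (Submodule.span ℝ _).zero_mem

lemma piComp_Jspace {r k : ℕ} (m : ℕ) :
    Submodule.map (piComp n m) (Jspace n r k) ≤ Jspace n r k := by
  rw [Jspace, Submodule.map_iSup]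
  refine iSup_le fun l => le_trans ?_ (le_iSup
    (fun l => Submodule.map (koszul n) (Hl n (r + l) (l + 1) (k + 1))) l)
  cases m with
  | zero =>
    rw [← Submodule.map_comp, piComp_zero_comp_koszul, Submodule.map_zero]
    exact bot_le
  | succ m =>
    rw [← Submodule.map_comp, piComp_comp_koszul, Submodule.map_comp]
    exact Submodule.map_mono (piComp_Hl m)

lemma piComp_Sspace {r k : ℕ} (m : ℕ) :
    Submodule.map (piComp n m) (Sspace n r k) ≤ Sspace n r k := by
  rw [Sspace, Submodule.map_sup, Submodule.map_sup]
  refine sup_le (sup_le ?_ ?_) ?_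
  · exact le_sup_of_le_left (le_sup_of_le_left (piComp_Pspace m))
  · exact le_sup_of_le_left (le_sup_of_le_right (piComp_Jspace m))
  · refine le_sup_of_le_right ?_
    split_ifs with hk
    · rw [Submodule.map_bot]
    · rw [← Submodule.map_comp, piComp_comp_extD, Submodule.map_comp]
      exact Submodule.map_mono (piComp_Jspace (m + 1))

lemma piComp_Sminus {r k : ℕ} (m : ℕ) :
    Submodule.map (piComp n m) (SminusSpace n r k) ≤ SminusSpace n r k := by
  rw [SminusSpace, Submodule.map_sup]
  refine sup_le (le_sup_of_le_left (piComp_Sspace m)) (le_sup_of_le_right ?_)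
  cases m with
  | zero =>
    rw [← Submodule.map_comp, piComp_zero_comp_koszul, Submodule.map_zero]
    exact bot_le
  | succ m =>
    rw [← Submodule.map_comp, piComp_comp_koszul, Submodule.map_comp]
    exact Submodule.map_mono (piComp_Sspace m)

lemma koszul_comp_koszul : (koszul n).comp (koszul n) = 0 :=
  LinearMap.ext fun ω => koszul_koszul ω

lemma koszul_Sminus {r k : ℕ} (hk : 1 ≤ k) :
    Submodule.map (koszul n) (SminusSpace n r k) ≤ SminusSpace n r (k - 1) := by
  rw [SminusSpace, Submodule.map_sup]
  refine sup_le ?_ ?_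
  · rw [SminusSpace]
    refine le_sup_of_le_right ?_
    have hk1 : k - 1 + 1 = k := by omega
    rw [hk1]
  · rw [← Submodule.map_comp, koszul_comp_koszul, Submodule.map_zero]
    exact bot_le

end Aux4
section Aux5

variable {n : ℕ}

lemma extD_piComp_closed {ω : PolyForm n} (hd : extD n ω = 0) (m : ℕ) :
    extD n (piComp n m ω) = 0 := by
  cases m with
  | zero => exact extD_piComp_zero ω
  | succ m =>
    have h := congrArg (fun f => f ω) (piComp_comp_extD (n := n) m)
    simp only [LinearMap.comp_apply] at h
    rw [← h, hd, map_zero]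

lemma sum_piComp (ω : PolyForm n) :
    ∑ m ∈ Finset.range ((Finset.univ.sup fun σ => (ω σ).totalDegree) + 1), piComp n m ω
      = ω := by
  funext σ
  rw [Finset.sum_apply]
  have hle : (ω σ).totalDegree + 1 ≤ (Finset.univ.sup fun σ => (ω σ).totalDegree) + 1 :=
    Nat.add_le_add_right (Finset.le_sup (f := fun σ => (ω σ).totalDegree) (Finset.mem_univ σ)) 1
  have := Finset.sum_subset (f := fun m => homogeneousComponent m (ω σ))
    (Finset.range_subset_range.2 hle)
    (fun x _ hx => homogeneousComponent_eq_zero x (ω σ) (by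
      have := Finset.mem_range.not.1 hx; omega))
  simp only [piComp_apply]
  rw [← this]
  exact sum_homogeneousComponent (ω σ)

lemma extD_koszul_piComp {k m : ℕ} {ω : PolyForm n}
    (hω : ω ∈ Lambda n k) (hd : extD n ω = 0) :
    extD n (koszul n (piComp n m ω)) = ((m + k : ℕ) : ℝ) • piComp n m ω := by
  have hη : piComp n m ω ∈ Lambda n k := piComp_mem_Lambda hω
  have hdη : extD n (piComp n m ω) = 0 := extD_piComp_closed hd m
  funext σ
  have h := homotopy_apply (piComp n m ω) σ
  rw [hdη, map_zero, Pi.zero_apply, add_zero] at h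
  rw [h, Pi.smul_apply]
  by_cases hσ : σ.card = k
  · rw [piComp_apply, euler_hc, hσ]
    rw [smul_eq_C_mul, smul_eq_C_mul, ← C_eq_coe_nat]
    push_cast
    rw [map_add]
    ring
  · rw [(mem_Lambda.1 hη) σ hσ]
    simp

end Aux5
/-- exactness of the trimmed serendipity complex
`0 → ℝ → S_r^-Λ^0 → S_r^-Λ^1 → ⋯ → S_r^-Λ^n → 0`: a closed `0`-form in `S_r^-Λ^0`
is constant, and for `k ≥ 1` every `ω ∈ S_r^-Λ^k` with `dω = 0` is `dμ` for some
`μ ∈ S_r^-Λ^{k-1}` (for `k = n` this includes surjectivity since every `n`-form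
is closed). -/
theorem Sminus_exact (n r : ℕ) (hn : 1 ≤ n) (hr : 1 ≤ r) :
    (∀ ω ∈ SminusSpace n r 0, extD n ω = 0 →
      ∃ c : ℝ, ω = c • formMonomial (0 : Fin n →₀ ℕ) ∅) ∧
    (∀ k, 1 ≤ k → k ≤ n → ∀ ω ∈ SminusSpace n r k, extD n ω = 0 →
      ∃ μ ∈ SminusSpace n r (k - 1), extD n μ = ω) := by
  constructor
  · -- the 0-form case
    intro ω hω hd
    have hωΛ : ω ∈ Lambda n 0 := Sminus_le_Lambda hω
    have hpd : ∀ i : Fin n, pderiv i (ω ∅) = 0 := by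
      intro i
      have h := congrFun hd {i}
      rw [extD_apply, Finset.sum_singleton, Finset.erase_singleton, Pi.zero_apply] at h
      have hsgn : sgn {i} i = 1 := by
        unfold sgn
        rw [Finset.filter_singleton, if_neg (lt_irrefl i), Finset.card_empty, pow_zero]
      rwa [hsgn, one_mul] at h
    have hm : ∀ m : ℕ, homogeneousComponent (m + 1) (ω ∅) = 0 := by
      intro m
      have hz : ∀ i ∈ (Finset.univ : Finset (Fin n)),
          X i * pderiv i (homogeneousComponent (m + 1) (ω ∅)) = 0 := by
        intro i _
        rw [← hc_pderiv, hpd i, map_zero, mul_zero]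
      have h0 : (((m + 1 : ℕ)) : ℝ) • homogeneousComponent (m + 1) (ω ∅) = 0 := by
        rw [← euler_hc]
        exact Finset.sum_eq_zero hz
      have h1 := congrArg (fun x => (((m + 1 : ℕ) : ℝ))⁻¹ • x) h0
      simp only [smul_smul, smul_zero] at h1
      rwa [inv_mul_cancel₀
        (Nat.cast_ne_zero.2 (Nat.succ_ne_zero m) : ((m + 1 : ℕ) : ℝ) ≠ 0), one_smul] at h1
    have hC : ω ∅ = C (coeff 0 (ω ∅)) := by
      conv_lhs => rw [← sum_homogeneousComponent (ω ∅)]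
      rw [Finset.sum_eq_single 0
        (fun b _ hb => by
          obtain ⟨m, rfl⟩ := Nat.exists_eq_succ_of_ne_zero hb
          exact hm m)
        (fun h0 => (h0 (Finset.mem_range.2 (Nat.succ_pos _))).elim)]
      exact homogeneousComponent_zero (ω ∅)
    refine ⟨coeff 0 (ω ∅), ?_⟩
    funext σ
    by_cases hσ : σ = ∅
    · subst hσ
      rw [Pi.smul_apply]
      unfold formMonomial
      rw [if_pos rfl, smul_monomial, smul_eq_mul, mul_one, ← C_apply]
      exact hC
    · rw [show ω σ = 0 from (mem_Lambda.1 hωΛ) σ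
        (fun h => hσ (Finset.card_eq_zero.1 h)), Pi.smul_apply]
      unfold formMonomial
      rw [if_neg hσ, smul_zero]
  · -- the positive-degree case
    intro k hk1 _ ω hω hd
    have hωΛ : ω ∈ Lambda n k := Sminus_le_Lambda hω
    set N := Finset.univ.sup fun σ => (ω σ).totalDegree with hN
    refine ⟨∑ m ∈ Finset.range (N + 1),
      (((m + k : ℕ) : ℝ))⁻¹ • koszul n (piComp n m ω), ?_, ?_⟩
    · refine Submodule.sum_mem _ fun m _ => Submodule.smul_mem _ _ ?_
      exact koszul_Sminus hk1
        (Submodule.mem_map_of_mem (piComp_Sminus m (Submodule.mem_map_of_mem hω)))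
    · rw [map_sum]
      have hterm : ∀ m ∈ Finset.range (N + 1),
          extD n ((((m + k : ℕ) : ℝ))⁻¹ • koszul n (piComp n m ω)) = piComp n m ω := by
        intro m _
        rw [map_smul, extD_koszul_piComp hωΛ hd, smul_smul,
          inv_mul_cancel₀ (Nat.cast_ne_zero.2 (by omega)), one_smul]
      rw [Finset.sum_congr rfl hterm, hN]
      exact sum_piComp ω
end
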